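/- Let M₁ = (V, I₁), M₂ = (V, I₂) be matroids whose largest common independent set has size r, and let S ∈ I₁ ∩ I₂ with |S| < r. Then the exchange graph G(S) contains an augmenting path from s to t with at most 1 + 2|S|/(r − |S|) internal vertices (i.e., of that many elements). -/

import Mathlib

open Classical

noncomputable section

structure FinMatroid (α : Type*) where
  Indep : Finset α → Prop
  empty_indep : Indep ∅
  subset_indep : ∀ ⦃A B : Finset α⦄, Indep A → B ⊆ A → Indep B
  exchange : ∀ ⦃A B : Finset α⦄, Indep A → Indep B → A.card < B.card →
    ∃ b ∈ B \ A, Indep (insert b A)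

variable {α : Type*} [DecidableEq α]

/-- The rank of a set `T`: the maximum cardinality of an independent subset of `T`. -/
def FinMatroid.rank (M : FinMatroid α) (T : Finset α) : ℕ :=
  (T.powerset.filter fun A => M.Indep A).sup Finset.card

/-- Vertices of the exchange graph: a source `src`, a sink `snk`, and the ground elements. -/
inductive EGV (α : Type*) where
  | src : EGV α
  | snk : EGV α
  | el : α → EGV α

/-- Arcs of the exchange graph `G(S)` for `S ∈ I₁ ∩ I₂`. -/
def egAdj (M₁ M₂ : FinMatroid α) (S : Finset α) : EGV α → EGV α → Prop
  | EGV.src, EGV.el b => b ∉ S ∧ M₁.Indep (insert b S)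
  | EGV.el b, EGV.snk => b ∉ S ∧ M₂.Indep (insert b S)
  | EGV.el x, EGV.el y =>
      (x ∈ S ∧ y ∉ S ∧ M₁.Indep (insert y (S.erase x))) ∨
      (x ∉ S ∧ y ∈ S ∧ M₂.Indep (insert x (S.erase y)))
  | _, _ => False

/-- Directed shortest-path distance in the exchange graph (number of arcs), `⊤` if unreachable. -/
def egDist (M₁ M₂ : FinMatroid α) (S : Finset α) (u v : EGV α) : ℕ∞ :=
  sInf {n : ℕ∞ | ∃ l : List (EGV α),
    List.Chain' (egAdj M₁ M₂ S) (u :: (l ++ [v])) ∧ n = (l.length : ℕ∞) + 1}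

namespace ShortAug

/-- Restated exchange axiom with the ambient `DecidableEq` instance. -/
lemma exchange' (M : FinMatroid α) {A B : Finset α} (hA : M.Indep A) (hB : M.Indep B)
    (h : A.card < B.card) : ∃ b ∈ B \ A, M.Indep (insert b A) := by
  have e : (fun a b => Classical.propDecidable (a = b) : DecidableEq α) =
      ‹DecidableEq α› := Subsingleton.elim _ _
  obtain ⟨b, hb, hbi⟩ := M.exchange hA hB h
  rw [e] at hb hbi
  exact ⟨b, hb, hbi⟩

/-- Grow an independent set `insert b A` with `A ⊆ S` to a full exchange. -/
lemma grow (M : FinMatroid α) {S : Finset α} (hS : M.Indep S) :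
    ∀ (n : ℕ) (A : Finset α), A ⊆ S → S.card ≤ A.card + n →
      ∀ {b : α}, b ∉ S → M.Indep (insert b A) →
      M.Indep (insert b S) ∨ ∃ a ∈ S, a ∉ A ∧ M.Indep (insert b (S.erase a)) := by
  intro n
  induction n with
  | zero =>
    intro A hAS hcard b hb hi
    have : A = S := Finset.eq_of_subset_of_card_le hAS (by omega)
    subst this; exact Or.inl hi
  | succ n ih =>
    intro A hAS hcard b hb hi
    rcases lt_trichotomy S.card (A.card + 1) with h | h | h
    · have : A = S := Finset.eq_of_subset_of_card_le hAS (by omega)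
      subst this; exact Or.inl hi
    · -- A = S.erase a for some a
      have hne : (S \ A).Nonempty := by
        rw [Finset.sdiff_nonempty]
        intro hsub
        have := Finset.card_le_card hsub
        omega
      obtain ⟨a, ha⟩ := hne
      rw [Finset.mem_sdiff] at ha
      have hAe : A = S.erase a := by
        apply Finset.eq_of_subset_of_card_le
        · intro x hx
          exact Finset.mem_erase.2 ⟨fun he => ha.2 (he ▸ hx), hAS hx⟩
        · rw [Finset.card_erase_of_mem ha.1]; omega
      exact Or.inr ⟨a, ha.1, ha.2, hAe ▸ hi⟩
    · -- exchange
      have hcard2 : (insert b A).card < S.card := by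
        have := Finset.card_insert_le b A
        omega
      obtain ⟨x, hx, hxi⟩ := exchange' M hi hS hcard2
      rw [Finset.mem_sdiff, Finset.mem_insert] at hx
      have hxA : x ∉ A := fun h => hx.2 (Or.inr h)
      have hxb : x ≠ b := fun h => hx.2 (Or.inl h)
      have : M.Indep (insert b (insert x A)) := by
        rwa [Finset.insert_comm] at hxi
      have hcard3 : S.card ≤ (insert x A).card + n := by
        rw [Finset.card_insert_of_notMem hxA]; omega
      rcases ih (insert x A) (Finset.insert_subset hx.1 hAS) hcard3 hb this with h1 | ⟨a, ha1, ha2, ha3⟩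
      · exact Or.inl h1
      · exact Or.inr ⟨a, ha1, fun h => ha2 (Finset.mem_insert_of_mem h), ha3⟩

lemma key (M : FinMatroid α) {S T' A : Finset α} (hS : M.Indep S) (hT' : M.Indep T') (hA : A ⊆ S)
    (hTS : ∀ x ∈ T', x ∈ S → x ∈ A) (hcard : A.card < T'.card) :
    ∃ b ∈ T', b ∉ S ∧
      (M.Indep (insert b S) ∨ ∃ a ∈ S, a ∉ A ∧ M.Indep (insert b (S.erase a))) := by
  obtain ⟨b, hb, hbi⟩ := exchange' M (M.subset_indep hS hA) hT' hcard
  rw [Finset.mem_sdiff] at hb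
  have hbS : b ∉ S := fun h => hb.2 (hTS b hb.1 h)
  refine ⟨b, hb.1, hbS, ?_⟩
  exact grow M hS (S.card - A.card) A hA (by omega) hbS hbi

variable (M₁ M₂ : FinMatroid α) (S : Finset α)

/-- Walks from `src` of a given length. -/
inductive R : ℕ → EGV α → Prop
  | zero : R 0 EGV.src
  | succ {n : ℕ} {u v : EGV α} : R n u → egAdj M₁ M₂ S u v → R (n + 1) v

def good : EGV α → ℕ → Prop
  | EGV.src, m => m = 0
  | EGV.snk, m => Even m
  | EGV.el b, m => (b ∈ S → Even m) ∧ (b ∉ S → Odd m)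

lemma parity {m : ℕ} {v : EGV α} (h : R M₁ M₂ S m v) : good S v m := by
  induction h with
  | zero => rfl
  | @succ n u v hR hadj ih =>
    cases u with
    | src =>
      cases v with
      | src => exact hadj.elim
      | snk => exact hadj.elim
      | el b =>
        have hadj' : b ∉ S ∧ M₁.Indep (insert b S) := hadj
        have hn : n = 0 := ih
        subst hn
        exact ⟨fun h => absurd h hadj'.1, fun _ => odd_one⟩
    | snk =>
      cases v with
      | src => exact hadj.elim
      | snk => exact hadj.elim
      | el b => exact hadj.elim
    | el x =>
      cases v with
      | src => exact hadj.elim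
      | snk =>
        have hadj' : x ∉ S ∧ M₂.Indep (insert x S) := hadj
        have ih' : (x ∈ S → Even n) ∧ (x ∉ S → Odd n) := ih
        exact (ih'.2 hadj'.1).add_one
      | el y =>
        have hadj' : (x ∈ S ∧ y ∉ S ∧ M₁.Indep (insert y (S.erase x))) ∨
            (x ∉ S ∧ y ∈ S ∧ M₂.Indep (insert x (S.erase y))) := hadj
        have ih' : (x ∈ S → Even n) ∧ (x ∉ S → Odd n) := ih
        show (y ∈ S → Even (n + 1)) ∧ (y ∉ S → Odd (n + 1))
        rcases hadj' with ⟨hx, hy, _⟩ | ⟨hx, hy, _⟩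
        · exact ⟨fun h => absurd h hy, fun _ => (ih'.1 hx).add_one⟩
        · exact ⟨fun _ => (ih'.2 hx).add_one, fun h => absurd hy h⟩

def reach (v : EGV α) : Prop := ∃ m, R M₁ M₂ S m v

def dd (v : EGV α) : ℕ := sInf {m | R M₁ M₂ S m v}

lemma dd_spec {v : EGV α} (h : reach M₁ M₂ S v) : R M₁ M₂ S (dd M₁ M₂ S v) v :=
  Nat.sInf_mem h

lemma dd_le {m : ℕ} {v : EGV α} (h : R M₁ M₂ S m v) : dd M₁ M₂ S v ≤ m :=
  Nat.sInf_le h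

lemma no_arc_to_src (p : EGV α) : ¬ egAdj M₁ M₂ S p EGV.src := by
  cases p <;> simp [egAdj]

lemma no_arc_from_snk (q : EGV α) : ¬ egAdj M₁ M₂ S EGV.snk q := by
  cases q <;> simp [egAdj]

lemma mid {β : Type*} (Rel : β → β → Prop) :
    ∀ (L : List β) (u v : β), List.Chain' Rel (u :: (L ++ [v])) →
      ∀ x ∈ L, (∃ p, Rel p x) ∧ (∃ q, Rel x q) := by
  intro L
  induction L with
  | nil => simp
  | cons y L ih =>
    intro u v hc x hx
    rw [List.cons_append, List.Chain', List.isChain_cons_cons] at hc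
    rcases List.mem_cons.1 hx with rfl | hx
    · refine ⟨⟨u, hc.1⟩, ?_⟩
      obtain ⟨z, tl, hzt⟩ := List.exists_cons_of_ne_nil (l := L ++ [v]) (by simp)
      rw [hzt, List.isChain_cons_cons] at hc
      exact ⟨z, hc.2.1⟩
    · exact ih y v hc.2 x hx

lemma all_el : ∀ (L : List (EGV α)), (∀ x ∈ L, ∃ a, x = EGV.el a) →
    ∃ l : List α, L = l.map EGV.el := by
  intro L
  induction L with
  | nil => exact fun _ => ⟨[], rfl⟩
  | cons y L ih =>
    intro h
    obtain ⟨l, hl⟩ := ih fun x hx => h x (List.mem_cons_of_mem _ hx)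
    obtain ⟨a, ha⟩ := h y List.mem_cons_self
    exact ⟨a :: l, by rw [ha, hl]; rfl⟩

lemma R_path {m : ℕ} {v : EGV α} (h : R M₁ M₂ S m v) :
    ∃ L : List (EGV α), L.length = m ∧ (EGV.src :: L).getLast? = some v ∧
      List.Chain' (egAdj M₁ M₂ S) (EGV.src :: L) := by
  induction h with
  | zero => exact ⟨[], rfl, rfl, List.isChain_singleton _⟩
  | @succ n u v hR hadj ih =>
    obtain ⟨L, hlen, hlast, hchain⟩ := ih
    refine ⟨L ++ [v], by simp [hlen], ?_, ?_⟩
    · rw [← List.cons_append, List.getLast?_append_of_ne_nil _ (by simp)]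
      rfl
    · rw [← List.cons_append]
      apply List.IsChain.append hchain (List.isChain_singleton _)
      intro x hx y hy
      rw [hlast, Option.mem_some_iff] at hx
      simp only [List.head?_cons, Option.mem_some_iff] at hy
      subst hx; subst hy; exact hadj

lemma adj_src {b : α} (h1 : b ∉ S) (h2 : M₁.Indep (insert b S)) :
    egAdj M₁ M₂ S EGV.src (EGV.el b) := ⟨h1, h2⟩

lemma adj_snk {b : α} (h1 : b ∉ S) (h2 : M₂.Indep (insert b S)) :
    egAdj M₁ M₂ S (EGV.el b) EGV.snk := ⟨h1, h2⟩

lemma adj_one {a b : α} (ha : a ∈ S) (hb : b ∉ S) (h : M₁.Indep (insert b (S.erase a))) :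
    egAdj M₁ M₂ S (EGV.el a) (EGV.el b) := Or.inl ⟨ha, hb, h⟩

lemma adj_two {a b : α} (hb : b ∉ S) (ha : a ∈ S) (h : M₂.Indep (insert b (S.erase a))) :
    egAdj M₁ M₂ S (EGV.el b) (EGV.el a) := Or.inr ⟨hb, ha, h⟩

lemma count_bound {T : Finset α} (hS₁ : M₁.Indep S) (hS₂ : M₂.Indep S)
    (hT₁ : M₁.Indep T) (hT₂ : M₂.Indep T) (P : α → Prop) (AX BX : Finset α)
    (hAX : AX ⊆ S) (hBX : BX ⊆ S)
    (hSP : ∀ a ∈ S, P a → a ∈ AX) (hSnP : ∀ a ∈ S, ¬ P a → a ∈ BX)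
    (h1 : ∀ b ∈ T, b ∉ S → P b →
      ¬(M₁.Indep (insert b S) ∨ ∃ a ∈ S, a ∉ AX ∧ M₁.Indep (insert b (S.erase a))))
    (h2 : ∀ b ∈ T, b ∉ S → ¬ P b →
      ¬(M₂.Indep (insert b S) ∨
        ∃ a ∈ S, a ∉ BX ∧ M₂.Indep (insert b (S.erase a)))) :
    T.card ≤ AX.card + BX.card := by
  classical
  have c1 : (T.filter P).card ≤ AX.card := by
    by_contra hc
    push_neg at hc
    obtain ⟨b, hbT, hbS, hcase⟩ := key M₁ hS₁
      (M₁.subset_indep hT₁ (Finset.filter_subset _ _)) hAX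
      (fun x hx hxS => hSP x hxS (Finset.mem_filter.1 hx).2) hc
    exact h1 b (Finset.mem_filter.1 hbT).1 hbS (Finset.mem_filter.1 hbT).2 hcase
  have c2 : (T.filter fun x => ¬ P x).card ≤ BX.card := by
    by_contra hc
    push_neg at hc
    obtain ⟨b, hbT, hbS, hcase⟩ := key M₂ hS₂
      (M₂.subset_indep hT₂ (Finset.filter_subset _ _)) hBX
      (fun x hx hxS => hSnP x hxS (Finset.mem_filter.1 hx).2) hc
    exact h2 b (Finset.mem_filter.1 hbT).1 hbS (Finset.mem_filter.1 hbT).2 hcase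
  have c3 := Finset.card_filter_add_card_filter_not (s := T) (p := P)
  omega

end ShortAug

/-- Cunningham's augmenting-path-length lemma: if the largest common independent set has size
`r` and `S ∈ I₁ ∩ I₂` has `|S| < r`, then the exchange graph `G(S)` contains an augmenting
path from `s` to `t` with at most `1 + 2|S|/(r − |S|)` internal elements. -/
theorem short_augmenting_path (M₁ M₂ : FinMatroid α) (S : Finset α) (r : ℕ)
    (hS₁ : M₁.Indep S) (hS₂ : M₂.Indep S)
    (hr_ex : ∃ T : Finset α, M₁.Indep T ∧ M₂.Indep T ∧ T.card = r)
    (hr_max : ∀ T : Finset α, M₁.Indep T → M₂.Indep T → T.card ≤ r)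
    (hlt : S.card < r) :
    ∃ l : List α,
      List.Chain' (egAdj M₁ M₂ S) (EGV.src :: (l.map EGV.el ++ [EGV.snk])) ∧
      (l.length : ℝ) ≤ 1 + 2 * (S.card : ℝ) / ((r : ℝ) - (S.card : ℝ)) := by
  classical
  obtain ⟨T, hT₁, hT₂, hTr⟩ := hr_ex
  -- Step 1: the sink is reachable.
  have hreach_snk : ShortAug.reach M₁ M₂ S EGV.snk := by
    by_contra hns
    set AX : Finset α := S.filter (fun a => ¬ ShortAug.reach M₁ M₂ S (EGV.el a)) with hAXd
    set BX : Finset α := S.filter (fun a => ShortAug.reach M₁ M₂ S (EGV.el a)) with hBXd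
    have hb := ShortAug.count_bound M₁ M₂ S hS₁ hS₂ hT₁ hT₂
      (fun b => ¬ ShortAug.reach M₁ M₂ S (EGV.el b)) AX BX
      (Finset.filter_subset _ _) (Finset.filter_subset _ _)
      (fun a ha hP => Finset.mem_filter.2 ⟨ha, hP⟩)
      (fun a ha hP => Finset.mem_filter.2 ⟨ha, not_not.1 hP⟩)
      (by
        rintro b hbT hbS hPb (hind | ⟨a, haS, haA, hind⟩)
        · exact hPb ⟨1, ShortAug.R.succ ShortAug.R.zero (ShortAug.adj_src M₁ M₂ S hbS hind)⟩
        · have hra : ShortAug.reach M₁ M₂ S (EGV.el a) := by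
            by_contra hra
            exact haA (Finset.mem_filter.2 ⟨haS, hra⟩)
          obtain ⟨m, hm⟩ := hra
          exact hPb ⟨m + 1, ShortAug.R.succ hm (ShortAug.adj_one M₁ M₂ S haS hbS hind)⟩)
      (by
        rintro b hbT hbS hPb (hind | ⟨a, haS, haA, hind⟩)
        · rw [not_not] at hPb
          obtain ⟨m, hm⟩ := hPb
          exact hns ⟨m + 1, ShortAug.R.succ hm (ShortAug.adj_snk M₁ M₂ S hbS hind)⟩
        · rw [not_not] at hPb
          obtain ⟨m, hm⟩ := hPb
          have hra : ¬ ShortAug.reach M₁ M₂ S (EGV.el a) := by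
            intro hra
            exact haA (Finset.mem_filter.2 ⟨haS, hra⟩)
          exact hra ⟨m + 1, ShortAug.R.succ hm (ShortAug.adj_two M₁ M₂ S hbS haS hind)⟩)
    have hdisj : Disjoint AX BX := by
      rw [Finset.disjoint_left]
      intro a ha hb
      exact (Finset.mem_filter.1 ha).2 (Finset.mem_filter.1 hb).2
    have hcu : AX.card + BX.card ≤ S.card := by
      rw [← Finset.card_union_of_disjoint hdisj]
      exact Finset.card_le_card (Finset.union_subset (Finset.filter_subset _ _)
        (Finset.filter_subset _ _))
    omega
  set ℓ := ShortAug.dd M₁ M₂ S EGV.snk with hℓ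
  have hRl : ShortAug.R M₁ M₂ S ℓ EGV.snk := ShortAug.dd_spec M₁ M₂ S hreach_snk
  have hpar : Even ℓ := ShortAug.parity M₁ M₂ S hRl
  have hl0 : ℓ ≠ 0 := by
    intro h
    rw [h] at hRl
    cases hRl
  obtain ⟨k, hk⟩ : ∃ k, ℓ = 2 * k := by
    obtain ⟨c, hc⟩ := hpar
    exact ⟨c, by omega⟩
  have hk1 : 1 ≤ k := by omega
  -- Step 2: the per-layer counting bound
  have main : ∀ i, 1 ≤ i → i ≤ k - 1 →
      r ≤ S.card + (S.filter (fun a => ShortAug.reach M₁ M₂ S (EGV.el a) ∧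
        ShortAug.dd M₁ M₂ S (EGV.el a) = 2 * i)).card := by
    intro i hi1 hi2
    set P : α → Prop := fun b => ShortAug.reach M₁ M₂ S (EGV.el b) →
      2 * i + 1 ≤ ShortAug.dd M₁ M₂ S (EGV.el b) with hP
    set Ai : Finset α := S.filter (fun a => ShortAug.reach M₁ M₂ S (EGV.el a) ∧
      ShortAug.dd M₁ M₂ S (EGV.el a) = 2 * i) with hAi
    set BX : Finset α := S.filter (fun a => ¬ P a) with hBXd
    have hb := ShortAug.count_bound M₁ M₂ S hS₁ hS₂ hT₁ hT₂ P (S.filter P ∪ Ai) BX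
      (Finset.union_subset (Finset.filter_subset _ _) (Finset.filter_subset _ _))
      (Finset.filter_subset _ _)
      (fun a ha hPa => Finset.mem_union_left _ (Finset.mem_filter.2 ⟨ha, hPa⟩))
      (fun a ha hPa => Finset.mem_filter.2 ⟨ha, hPa⟩)
      (by
        rintro b hbT hbS hPb (hind | ⟨a, haS, haA, hind⟩)
        · have h1 : ShortAug.R M₁ M₂ S 1 (EGV.el b) :=
            ShortAug.R.succ ShortAug.R.zero (ShortAug.adj_src M₁ M₂ S hbS hind)
          have := hPb ⟨1, h1⟩
          have := ShortAug.dd_le M₁ M₂ S h1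
          omega
        · have haP : ¬ P a := fun h => haA (Finset.mem_union_left _ (Finset.mem_filter.2 ⟨haS, h⟩))
          simp only [hP] at haP
          push_neg at haP
          obtain ⟨hra, hda⟩ := haP
          have hane : ShortAug.dd M₁ M₂ S (EGV.el a) ≠ 2 * i := by
            intro h
            exact haA (Finset.mem_union_right _ (Finset.mem_filter.2 ⟨haS, hra, h⟩))
          have hstep : ShortAug.R M₁ M₂ S (ShortAug.dd M₁ M₂ S (EGV.el a) + 1) (EGV.el b) :=
            ShortAug.R.succ (ShortAug.dd_spec M₁ M₂ S hra) (ShortAug.adj_one M₁ M₂ S haS hbS hind)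
          have hdb := ShortAug.dd_le M₁ M₂ S hstep
          have := hPb ⟨_, hstep⟩
          omega)
      (by
        rintro b hbT hbS hPb (hind | ⟨a, haS, haA, hind⟩)
        · simp only [hP] at hPb
          push_neg at hPb
          obtain ⟨hrb, hdb⟩ := hPb
          have hstep : ShortAug.R M₁ M₂ S (ShortAug.dd M₁ M₂ S (EGV.el b) + 1) EGV.snk :=
            ShortAug.R.succ (ShortAug.dd_spec M₁ M₂ S hrb) (ShortAug.adj_snk M₁ M₂ S hbS hind)
          have := ShortAug.dd_le M₁ M₂ S hstep
          rw [← hℓ] at this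
          omega
        · simp only [hP] at hPb
          push_neg at hPb
          obtain ⟨hrb, hdb⟩ := hPb
          have haP : P a := by
            by_contra h
            exact haA (Finset.mem_filter.2 ⟨haS, h⟩)
          simp only [hP] at haP
          have hstep : ShortAug.R M₁ M₂ S (ShortAug.dd M₁ M₂ S (EGV.el b) + 1) (EGV.el a) :=
            ShortAug.R.succ (ShortAug.dd_spec M₁ M₂ S hrb) (ShortAug.adj_two M₁ M₂ S hbS haS hind)
          have hra : ShortAug.reach M₁ M₂ S (EGV.el a) := ⟨_, hstep⟩
          have hda := ShortAug.dd_le M₁ M₂ S hstep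
          have hge := haP hra
          have hdaeq : ShortAug.dd M₁ M₂ S (EGV.el a) = 2 * i + 1 := by omega
          have hpar2 : ShortAug.good S (EGV.el a) (ShortAug.dd M₁ M₂ S (EGV.el a)) :=
            ShortAug.parity M₁ M₂ S (ShortAug.dd_spec M₁ M₂ S hra)
          obtain ⟨c, hc⟩ := hpar2.1 haS
          omega)
    have hcu := Finset.card_union_le (S.filter P) Ai
    have hdisj : Disjoint (S.filter P) BX := by
      rw [Finset.disjoint_left]
      intro a ha hb2
      exact (Finset.mem_filter.1 hb2).2 (Finset.mem_filter.1 ha).2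
    have hc : (S.filter P).card + BX.card ≤ S.card := by
      rw [← Finset.card_union_of_disjoint hdisj]
      exact Finset.card_le_card (Finset.union_subset (Finset.filter_subset _ _)
        (Finset.filter_subset _ _))
    omega
  -- Step 3: summing the disjoint layers
  have hsum : (k - 1) * (r - S.card) ≤ S.card := by
    classical
    set F : ℕ → Finset α := fun i => S.filter (fun a => ShortAug.reach M₁ M₂ S (EGV.el a) ∧
      ShortAug.dd M₁ M₂ S (EGV.el a) = 2 * i) with hF
    have hdisj : ∀ i ∈ Finset.Icc 1 (k-1), ∀ j ∈ Finset.Icc 1 (k-1), i ≠ j →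
        Disjoint (F i) (F j) := by
      intro i _ j _ hij
      rw [Finset.disjoint_left]
      intro a hai haj
      have h1 := (Finset.mem_filter.1 hai).2.2
      have h2 := (Finset.mem_filter.1 haj).2.2
      omega
    have hcard : ((Finset.Icc 1 (k-1)).biUnion F).card = ∑ i ∈ Finset.Icc 1 (k-1), (F i).card :=
      Finset.card_biUnion hdisj
    have hsub : (Finset.Icc 1 (k-1)).biUnion F ⊆ S := by
      intro a ha
      obtain ⟨i, _, hai⟩ := Finset.mem_biUnion.1 ha
      exact Finset.filter_subset _ _ hai
    have hle : ∑ i ∈ Finset.Icc 1 (k-1), (F i).card ≤ S.card := by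
      rw [← hcard]
      exact Finset.card_le_card hsub
    have heach : ∀ i ∈ Finset.Icc 1 (k-1), r - S.card ≤ (F i).card := by
      intro i hi
      rw [Finset.mem_Icc] at hi
      have hmi := main i hi.1 hi.2
      have hFi : F i = S.filter (fun a => ShortAug.reach M₁ M₂ S (EGV.el a) ∧
          ShortAug.dd M₁ M₂ S (EGV.el a) = 2 * i) := by simp only [hF]
      rw [hFi]
      omega
    calc (k - 1) * (r - S.card) = ∑ _i ∈ Finset.Icc 1 (k-1), (r - S.card) := by
          rw [Finset.sum_const, smul_eq_mul, Nat.card_Icc]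
          congr 1
      _ ≤ ∑ i ∈ Finset.Icc 1 (k-1), (F i).card := Finset.sum_le_sum heach
      _ ≤ S.card := hle
  -- Step 4: extract the path
  obtain ⟨L, hlen, hlast, hchain⟩ := ShortAug.R_path M₁ M₂ S hRl
  have hLne : L ≠ [] := by
    intro h
    subst h
    simp [List.getLast?] at hlast
  have hlast' : L.getLast? = some EGV.snk := by
    rwa [show EGV.src :: L = [EGV.src] ++ L from rfl,
      List.getLast?_append_of_ne_nil _ hLne] at hlast
  have hsplit : L.dropLast ++ [EGV.snk] = L :=
    List.dropLast_append_getLast? _ hlast'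
  set L' := L.dropLast with hL'
  have hchain' : List.Chain' (egAdj M₁ M₂ S) (EGV.src :: (L' ++ [EGV.snk])) := by
    rwa [hsplit]
  have hmid := ShortAug.mid (egAdj M₁ M₂ S) L' EGV.src EGV.snk hchain'
  have hall : ∀ x ∈ L', ∃ a, x = EGV.el a := by
    intro x hx
    obtain ⟨⟨p, hp⟩, ⟨q, hq⟩⟩ := hmid x hx
    cases x with
    | src => exact absurd hp (ShortAug.no_arc_to_src M₁ M₂ S p)
    | snk => exact absurd hq (ShortAug.no_arc_from_snk M₁ M₂ S q)
    | el a => exact ⟨a, rfl⟩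
  obtain ⟨l, hl⟩ := ShortAug.all_el L' hall
  have hllen : l.length = 2 * k - 1 := by
    have h1 : L'.length = L.length - 1 := List.length_dropLast
    have h2 : L'.length = l.length := by rw [hl, List.length_map]
    omega
  refine ⟨l, by rwa [hl] at hchain', ?_⟩
  -- Step 5: the numeric bound
  have hrS : (S.card : ℝ) < (r : ℝ) := by exact_mod_cast hlt
  have hpos : (0 : ℝ) < (r : ℝ) - (S.card : ℝ) := by linarith
  have hcast : ((k : ℝ) - 1) * ((r : ℝ) - (S.card : ℝ)) ≤ (S.card : ℝ) := by
    have := hsum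
    have h2 : (((k-1) * (r - S.card) : ℕ) : ℝ) ≤ ((S.card : ℕ) : ℝ) := by exact_mod_cast this
    rw [Nat.cast_mul, Nat.cast_sub hk1, Nat.cast_sub (le_of_lt hlt)] at h2
    push_cast at h2 ⊢
    linarith
  have hlR : (l.length : ℝ) = 2 * (k : ℝ) - 1 := by
    rw [hllen]
    push_cast [Nat.cast_sub (by omega : 1 ≤ 2 * k)]
    ring
  have h2 : 2 * (k : ℝ) - 2 ≤ 2 * (S.card : ℝ) / ((r : ℝ) - (S.card : ℝ)) := by
    rw [le_div_iff₀ hpos]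
    nlinarith [hcast]
  rw [hlR]
  linarith
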